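/- For integers q ≥ 2 and k ≥ 0, the composite map M_1^{q-2} ∘ M_2 ∘ M_1^{k} maps [0,1] onto the interval [1/q, (k+1)/(qk+q-1)], and consequently μ([1/q, (k+1)/(qk+q-1)]) = 2^{-k-q+1} for Minkowski's question mark measure μ. -/

import Mathlib

open MeasureTheory
open scoped ENNReal

open Set Filter Topology

lemma M1_iter (m : ℕ) {x : ℝ} (hx : 0 ≤ x) :
    (fun x : ℝ => x / (1 + x))^[m] x = x / (1 + m * x) := by
  induction m with
  | zero => simp
  | succ n ih =>
    rw [Function.iterate_succ_apply', ih]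
    have h1 : (0:ℝ) < 1 + n * x := by positivity
    show x / (1 + ↑n * x) / (1 + x / (1 + ↑n * x)) = x / (1 + ↑(n+1) * x)
    rw [div_div]
    congr 1
    push_cast
    field_simp
    ring

lemma M1_iter_mem (m : ℕ) {x : ℝ} (hx : x ∈ Icc (0:ℝ) 1) :
    x / (1 + m * x) ∈ Icc (0:ℝ) 1 := by
  obtain ⟨h0, h1⟩ := hx
  have hd : (0:ℝ) < 1 + m * x := by positivity
  constructor
  · positivity
  · rw [div_le_one hd]; nlinarith

lemma Q_iter {Q : ℝ → ℝ} (hQM1 : ∀ x ∈ Set.Icc (0 : ℝ) 1, Q (x / (1 + x)) = Q x / 2)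
    (m : ℕ) {x : ℝ} (hx : x ∈ Icc (0:ℝ) 1) :
    Q ((fun x : ℝ => x / (1 + x))^[m] x) = Q x / 2 ^ m := by
  induction m with
  | zero => simp
  | succ n ih =>
    rw [Function.iterate_succ_apply', hQM1 _ (by rw [M1_iter n hx.1]; exact M1_iter_mem n hx),
      ih, div_div, pow_succ]

lemma measure_Ico_eq {μ : Measure ℝ} {Q : ℝ → ℝ}
    (hQcont : ContinuousOn Q (Set.Icc 0 1))
    (hdist : ∀ x ∈ Set.Icc (0 : ℝ) 1, μ (Set.Icc 0 x) = ENNReal.ofReal (Q x))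
    {a : ℝ} (ha : 0 < a) (ha1 : a ≤ 1) :
    μ (Ico (0:ℝ) a) = ENNReal.ofReal (Q a) := by
  set s : ℕ → Set ℝ := fun n => Icc 0 (a - a / (n + 1)) with hs
  have hxmem : ∀ n : ℕ, a - a / (n + 1) ∈ Icc (0:ℝ) 1 := by
    intro n
    have h1 : (0:ℝ) < n + 1 := by positivity
    constructor
    · have : a / (n+1) ≤ a := by
        rw [div_le_iff₀ h1]; nlinarith
      linarith
    · have : (0:ℝ) < a / (n+1) := by positivity
      linarith
  have hmono : Monotone s := by
    intro m n hmn
    apply Icc_subset_Icc le_rfl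
    have h1 : (0:ℝ) < m + 1 := by positivity
    have h2 : (0:ℝ) < n + 1 := by positivity
    have : a / (n+1) ≤ a / (m+1) := by
      apply div_le_div_of_nonneg_left ha.le h1
      exact_mod_cast add_le_add_left (Nat.cast_le.mpr hmn) 1
    linarith
  have hU : ⋃ n, s n = Ico (0:ℝ) a := by
    ext y
    simp only [hs, mem_iUnion, mem_Icc, mem_Ico]
    constructor
    · rintro ⟨n, h0, h1⟩
      have h2 : (0:ℝ) < a / (n+1) := by positivity
      exact ⟨h0, by linarith⟩
    · rintro ⟨h0, h1⟩
      obtain ⟨n, hn⟩ := exists_nat_ge (a / (a - y))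
      refine ⟨n, h0, ?_⟩
      have hay : (0:ℝ) < a - y := by linarith
      have h3 : a / (a - y) ≤ (n:ℝ) + 1 := by linarith
      have h4 : a ≤ ((n:ℝ) + 1) * (a - y) := by
        rw [div_le_iff₀ hay] at h3; linarith
      have h5 : a / ((n:ℝ)+1) ≤ a - y := by
        rw [div_le_iff₀ (by positivity : (0:ℝ) < (n:ℝ)+1)]; linarith
      linarith
  have h1 : Tendsto (fun n => μ (s n)) atTop (𝓝 (μ (Ico (0:ℝ) a))) := by
    rw [← hU]; exact tendsto_measure_iUnion_atTop hmono
  have hxt : Tendsto (fun n : ℕ => a - a / (n + 1)) atTop (𝓝 a) := by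
    have : Tendsto (fun n : ℕ => a / (n + 1)) atTop (𝓝 0) := by
      simpa [div_eq_mul_inv] using tendsto_one_div_add_atTop_nhds_zero_nat.const_mul a
    simpa using tendsto_const_nhds.sub this
  have h3 : Tendsto (fun n : ℕ => Q (a - a / (n + 1))) atTop (𝓝 (Q a)) := by
    apply (hQcont.continuousWithinAt (mem_Icc.mpr ⟨ha.le, ha1⟩)).tendsto.comp
    rw [tendsto_nhdsWithin_iff]
    exact ⟨hxt, Eventually.of_forall hxmem⟩
  have h2 : Tendsto (fun n => μ (s n)) atTop (𝓝 (ENNReal.ofReal (Q a))) := by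
    have := (ENNReal.continuous_ofReal.tendsto _).comp h3
    apply this.congr
    intro n
    exact (hdist _ (hxmem n)).symm
  exact tendsto_nhds_unique h1 h2

/-- For integers `q ≥ 2` and `k ≥ 0`, the composite map `M₁^{q-2} ∘ M₂ ∘ M₁^{k}`
(where `M₁(x) = x/(1+x)`, `M₂(x) = 1/(2-x)`) maps `[0,1]` onto the interval
`[1/q, (k+1)/(qk+q-1)]`, and consequently Minkowski's question mark measure `μ`
gives this interval measure `2^{-k-q+1}`. -/
theorem composite_map_image_and_measure
    (μ : Measure ℝ) [IsProbabilityMeasure μ] (hμsupp : μ (Set.Icc (0 : ℝ) 1) = 1)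
    (Q : ℝ → ℝ)
    (hQcont : ContinuousOn Q (Set.Icc 0 1)) (hQmono : MonotoneOn Q (Set.Icc 0 1))
    (hQ0 : Q 0 = 0) (hQ1 : Q 1 = 1)
    (hQM1 : ∀ x ∈ Set.Icc (0 : ℝ) 1, Q (x / (1 + x)) = Q x / 2)
    (hQM2 : ∀ x ∈ Set.Icc (0 : ℝ) 1, Q (1 / (2 - x)) = (Q x + 1) / 2)
    (hdist : ∀ x ∈ Set.Icc (0 : ℝ) 1, μ (Set.Icc 0 x) = ENNReal.ofReal (Q x))
    (q k : ℕ) (hq : 2 ≤ q) :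
    ((fun x : ℝ => x / (1 + x))^[q - 2] ∘ (fun x : ℝ => 1 / (2 - x)) ∘
        (fun x : ℝ => x / (1 + x))^[k]) '' Set.Icc 0 1 =
      Set.Icc (1 / (q : ℝ)) ((k + 1) / ((q : ℝ) * k + q - 1)) ∧
    μ (Set.Icc (1 / (q : ℝ)) ((k + 1) / ((q : ℝ) * k + q - 1))) =
      (1 / 2 : ℝ≥0∞) ^ (k + q - 1) := by
  have hq2 : (2:ℝ) ≤ (q:ℝ) := by exact_mod_cast hq
  have hqcast : ((q - 2 : ℕ) : ℝ) = (q:ℝ) - 2 := by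
    push_cast [Nat.cast_sub hq]; ring
  set f : ℝ → ℝ := ((fun x : ℝ => x / (1 + x))^[q - 2] ∘ (fun x : ℝ => 1 / (2 - x)) ∘
        (fun x : ℝ => x / (1 + x))^[k]) with hf
  set g : ℝ → ℝ := fun x => (1 + k * x) / (q + ((q:ℝ) * k - 1) * x) with hg
  -- denominators positive
  have hden : ∀ x ∈ Icc (0:ℝ) 1, (0:ℝ) < q + ((q:ℝ) * k - 1) * x := by
    intro x ⟨h0, h1⟩
    have : ((q:ℝ) * k - 1) * x = (q:ℝ)*k*x - x := by ring
    nlinarith [mul_nonneg (mul_nonneg (by positivity : (0:ℝ) ≤ (q:ℝ)) (Nat.cast_nonneg k : (0:ℝ) ≤ k)) h0]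
  -- intermediate memberships
  have hymem : ∀ x ∈ Icc (0:ℝ) 1, (fun x : ℝ => x / (1 + x))^[k] x ∈ Icc (0:ℝ) 1 := by
    intro x hx; rw [M1_iter k hx.1]; exact M1_iter_mem k hx
  have hzmem : ∀ y ∈ Icc (0:ℝ) 1, 1 / (2 - y) ∈ Icc (0:ℝ) 1 := by
    intro y ⟨h0, h1⟩
    have hd : (0:ℝ) < 2 - y := by linarith
    constructor
    · positivity
    · rw [div_le_one hd]; linarith
  -- f = g on [0,1]
  have hfg : ∀ x ∈ Icc (0:ℝ) 1, f x = g x := by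
    intro x hx
    obtain ⟨h0, h1⟩ := hx
    have hA : (0:ℝ) < 1 + k * x := by positivity
    have hB : (0:ℝ) < 2 + (2 * (k:ℝ) - 1) * x := by nlinarith
    have hy := hymem x ⟨h0, h1⟩
    rw [M1_iter k h0] at hy
    have hz : (1:ℝ) / (2 - x / (1 + k * x)) = (1 + k * x) / (2 + (2 * (k:ℝ) - 1) * x) := by
      rw [div_eq_div_iff (by nlinarith [hy.2] : (0:ℝ) < 2 - x / (1 + k*x)).ne' hB.ne']
      field_simp
      ring
    have hznn : (0:ℝ) ≤ (1 + k * x) / (2 + (2 * (k:ℝ) - 1) * x) := by positivity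
    simp only [hf, hg, Function.comp_apply]
    rw [M1_iter k h0, hz, M1_iter (q-2) hznn, hqcast]
    rw [div_div]
    congr 1
    have hD := hden x ⟨h0, h1⟩
    field_simp
    ring
  -- monotonicity of g
  have hgmono : MonotoneOn g (Icc (0:ℝ) 1) := by
    intro x hx y hy hxy
    have hdx := hden x hx
    have hdy := hden y hy
    simp only [hg]
    rw [div_le_div_iff₀ hdx hdy]
    nlinarith
  -- continuity of g
  have hgcont : ContinuousOn g (Icc (0:ℝ) 1) := by
    apply ContinuousOn.div (by fun_prop) (by fun_prop)
    intro x hx; exact (hden x hx).ne'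
  -- endpoint values
  have hg0 : g 0 = 1 / (q:ℝ) := by simp [hg]
  have hg1 : g 1 = (k + 1) / ((q : ℝ) * k + q - 1) := by
    simp only [hg, mul_one]
    rw [show (1:ℝ) + (k:ℝ) = (k:ℝ) + 1 from by ring,
      show (q:ℝ) + ((q:ℝ) * (k:ℝ) - 1) = (q:ℝ) * (k:ℝ) + (q:ℝ) - 1 from by ring]
  -- image
  have himg : f '' Icc 0 1 = Icc (1 / (q : ℝ)) ((k + 1) / ((q : ℝ) * k + q - 1)) := by
    rw [image_congr hfg]
    apply subset_antisymm
    · rintro _ ⟨x, hx, rfl⟩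
      rw [← hg0, ← hg1]
      exact ⟨hgmono (left_mem_Icc.mpr zero_le_one) hx hx.1,
        hgmono hx (right_mem_Icc.mpr zero_le_one) hx.2⟩
    · rw [← hg0, ← hg1]
      exact intermediate_value_Icc zero_le_one hgcont
  refine ⟨himg, ?_⟩
  -- Q values
  have hQf : ∀ x ∈ Icc (0:ℝ) 1, Q (g x) = ((Q x / 2 ^ k + 1) / 2) / 2 ^ (q - 2) := by
    intro x hx
    rw [← hfg x hx]
    simp only [hf, Function.comp_apply]
    rw [Q_iter hQM1 (q-2) (hzmem _ (hymem x hx)), hQM2 _ (hymem x hx), Q_iter hQM1 k hx]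
  have h01 : (0:ℝ) ∈ Icc (0:ℝ) 1 := left_mem_Icc.mpr zero_le_one
  have h11 : (1:ℝ) ∈ Icc (0:ℝ) 1 := right_mem_Icc.mpr zero_le_one
  have hpow : (2:ℝ) * 2 ^ (q - 2) = 2 ^ (q - 1) := by
    rw [← pow_succ']
    congr 1
    omega
  have hQa : Q (1 / (q:ℝ)) = 1 / 2 ^ (q - 1) := by
    rw [← hg0, hQf 0 h01, hQ0]
    rw [div_div, hpow]
    norm_num
  have hQb : Q ((k + 1) / ((q : ℝ) * k + q - 1)) = (1 / 2 ^ k + 1) / 2 ^ (q - 1) := by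
    rw [← hg1, hQf 1 h11, hQ1]
    rw [div_div, hpow]
  -- endpoints in [0,1] and ordering
  have hqk : (0:ℝ) ≤ (q:ℝ) * (k:ℝ) := by positivity
  have hdb : (0:ℝ) < (q:ℝ) * (k:ℝ) + (q:ℝ) - 1 := by linarith
  have ha : (0:ℝ) < 1 / (q:ℝ) := by positivity
  have hb1 : (k + 1) / ((q : ℝ) * k + q - 1) ≤ 1 := by
    rw [div_le_one hdb]
    nlinarith [Nat.cast_nonneg (α := ℝ) k]
  have hab : 1 / (q:ℝ) ≤ (k + 1) / ((q : ℝ) * k + q - 1) := by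
    rw [div_le_div_iff₀ (by linarith) hdb]
    nlinarith [Nat.cast_nonneg (α := ℝ) k]
  have ha1 : 1 / (q:ℝ) ≤ 1 := by
    rw [div_le_one (by linarith)]; linarith
  have hbmem : (k + 1) / ((q : ℝ) * k + q - 1) ∈ Icc (0:ℝ) 1 :=
    ⟨le_trans ha.le hab, hb1⟩
  -- measure computation
  have hsplit : Icc (0:ℝ) ((k + 1) / ((q : ℝ) * k + q - 1)) \ Ico 0 (1 / (q:ℝ))
      = Icc (1 / (q:ℝ)) ((k + 1) / ((q : ℝ) * k + q - 1)) := by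
    ext y
    simp only [mem_diff, mem_Icc, mem_Ico, not_and, not_lt]
    constructor
    · rintro ⟨⟨h0, h1⟩, h2⟩
      exact ⟨h2 h0, h1⟩
    · rintro ⟨h0, h1⟩
      exact ⟨⟨le_trans ha.le h0, h1⟩, fun _ => h0⟩
  have hIco := measure_Ico_eq hQcont hdist ha ha1
  have hfin : μ (Ico (0:ℝ) (1 / (q:ℝ))) ≠ ⊤ := by
    rw [hIco]; exact ENNReal.ofReal_ne_top
  have hmeas : μ (Icc (1 / (q:ℝ)) ((k + 1) / ((q : ℝ) * k + q - 1)))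
      = ENNReal.ofReal ((1 / 2 ^ k + 1) / 2 ^ (q - 1)) - ENNReal.ofReal (1 / 2 ^ (q - 1)) := by
    rw [← hsplit, measure_diff (Ico_subset_Icc_self.trans (Icc_subset_Icc_right hab))
      measurableSet_Ico.nullMeasurableSet hfin, hdist _ hbmem, hIco, hQa, hQb]
  rw [hmeas, ← ENNReal.ofReal_sub _ (by positivity)]
  have hval : (1 / 2 ^ k + 1) / 2 ^ (q - 1) - 1 / 2 ^ (q - 1) = (1/2:ℝ) ^ (k + q - 1) := by
    have h2 : (2:ℝ) ^ k * 2 ^ (q - 1) = 2 ^ (k + q - 1) := by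
      rw [← pow_add]; congr 1; omega
    rw [div_pow, one_pow, ← h2, ← sub_div, add_sub_cancel_right, div_div]
  rw [hval, ENNReal.ofReal_pow (by norm_num), ENNReal.ofReal_div_of_pos (by norm_num),
    ENNReal.ofReal_one, ENNReal.ofReal_ofNat]
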